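/- For every sequence of 2-max functions f_n: {1,...,n} → {1,...,n}, the fraction D[f_n]/n! of permutations that are f_n-derangements converges to 1/e as n → ∞. -/

import Mathlib

open Filter Finset

section aux
variable {n : ℕ}

/-- number of permutations agreeing with `f` on `S` -/
private def agreeCount (f : Fin n → Fin n) (S : Finset (Fin n)) : ℕ :=
  (Finset.univ.filter fun g : Equiv.Perm (Fin n) => ∀ i ∈ S, g i = f i).card

private lemma incl_excl (f : Fin n → Fin n) :
    ((Finset.univ.filter fun g : Equiv.Perm (Fin n) => ∀ i, g i ≠ f i).card : ℤ)
      = ∑ S : Finset (Fin n), (-1 : ℤ) ^ S.card * agreeCount f S := by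
  classical
  have key : ∀ g : Equiv.Perm (Fin n),
      (if (∀ i, g i ≠ f i) then (1 : ℤ) else 0)
        = ∑ S : Finset (Fin n), (if (∀ i ∈ S, g i = f i) then (-1 : ℤ) ^ S.card else 0) := by
    intro g
    have h1 : (Finset.univ : Finset (Finset (Fin n))).filter
        (fun S => ∀ i ∈ S, g i = f i)
          = (Finset.univ.filter fun i => g i = f i).powerset := by
      ext S
      simp [Finset.subset_iff]
    rw [← Finset.sum_filter, h1, Finset.sum_powerset_neg_one_pow_card]
    simp [Finset.filter_eq_empty_iff]
  rw [Finset.card_filter]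
  push_cast
  calc (∑ g : Equiv.Perm (Fin n), if (∀ i, g i ≠ f i) then (1 : ℤ) else 0)
      = ∑ g : Equiv.Perm (Fin n), ∑ S : Finset (Fin n),
          (if (∀ i ∈ S, g i = f i) then (-1 : ℤ) ^ S.card else 0) := by
        exact Finset.sum_congr rfl fun g _ => key g
    _ = ∑ S : Finset (Fin n), ∑ g : Equiv.Perm (Fin n),
          (if (∀ i ∈ S, g i = f i) then (-1 : ℤ) ^ S.card else 0) := Finset.sum_comm
    _ = ∑ S : Finset (Fin n), (-1 : ℤ) ^ S.card * agreeCount f S := by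
        refine Finset.sum_congr rfl fun S _ => ?_
        rw [← Finset.sum_filter, Finset.sum_const]
        simp [agreeCount, mul_comm]

end aux

section aux2
variable {n : ℕ}

private lemma agreeCount_of_not_injOn (f : Fin n → Fin n) (S : Finset (Fin n))
    (hf : ¬ Set.InjOn f S) : agreeCount f S = 0 := by
  classical
  rw [agreeCount, Finset.card_eq_zero, Finset.filter_eq_empty_iff]
  intro g _ hg
  apply hf
  intro a ha b hb hab
  have := hg a ha
  have := hg b hb
  apply g.injective
  rw [hg a ha, hg b hb, hab]

private lemma agreeCount_of_injOn (f : Fin n → Fin n) (S : Finset (Fin n))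
    (hf : Set.InjOn f S) : agreeCount f S = (n - S.card).factorial := by
  classical
  set T := S.image f with hT
  have hTcard : T.card = S.card := Finset.card_image_of_injOn hf
  -- construct a permutation g₀ extending f on S
  have hc : Fintype.card {x : Fin n // ¬ x ∈ S} = Fintype.card {y : Fin n // ¬ y ∈ T} := by
    rw [Fintype.card_subtype_compl, Fintype.card_subtype_compl]
    rw [Fintype.card_coe, Fintype.card_coe, hTcard]
  have eC : {x : Fin n // ¬ x ∈ S} ≃ {y : Fin n // ¬ y ∈ T} := Fintype.equivOfCardEq hc
  obtain ⟨eS, heS⟩ : ∃ e : {x : Fin n // x ∈ S} ≃ {y : Fin n // y ∈ T},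
      ∀ x, (e x : Fin n) = f x := by
    have hbij : Function.Bijective
        (fun x : {x : Fin n // x ∈ S} => (⟨f x.1, Finset.mem_image_of_mem f x.2⟩ :
          {y : Fin n // y ∈ T})) := by
      constructor
      · intro a b hab
        exact Subtype.ext (hf a.2 b.2 (by simpa using hab))
      · rintro ⟨y, hy⟩
        obtain ⟨x, hx, rfl⟩ := Finset.mem_image.mp hy
        exact ⟨⟨x, hx⟩, rfl⟩
    exact ⟨Equiv.ofBijective _ hbij, fun x => rfl⟩
  set g₀ : Equiv.Perm (Fin n) :=
    (Equiv.sumCompl (· ∈ S)).symm.trans ((eS.sumCongr eC).trans (Equiv.sumCompl (· ∈ T)))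
    with hg₀def
  have hg₀ : ∀ i ∈ S, g₀ i = f i := by
    intro i hi
    simp only [hg₀def, Equiv.trans_apply, Equiv.sumCompl_symm_apply_of_pos (p := (· ∈ S)) hi,
      Equiv.sumCongr_apply, Sum.map_inl, Equiv.sumCompl_apply_inl]
    exact heS ⟨i, hi⟩
  -- the agree-set is a right coset of the pointwise stabilizer of T
  have hcoset : agreeCount f S
      = (Finset.univ.filter fun h : Equiv.Perm (Fin n) => ∀ y ∈ T, h y = y).card := by
    rw [agreeCount]
    refine Finset.card_bij' (fun g _ => g * g₀⁻¹) (fun h _ => h * g₀) ?_ ?_ ?_ ?_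
    · intro g hg
      simp only [Finset.mem_filter, Finset.mem_univ, true_and] at hg ⊢
      intro y hy
      obtain ⟨x, hx, rfl⟩ := Finset.mem_image.mp hy
      have h1 : g₀⁻¹ (f x) = x := by
        rw [← hg₀ x hx]; exact g₀.symm_apply_apply x
      rw [Equiv.Perm.mul_apply, h1, hg x hx]
    · intro h hh
      simp only [Finset.mem_filter, Finset.mem_univ, true_and] at hh ⊢
      intro i hi
      rw [Equiv.Perm.mul_apply, hg₀ i hi, hh (f i) (Finset.mem_image_of_mem f hi)]
    · intro g _; exact inv_mul_cancel_right g g₀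
    · intro h _; exact mul_inv_cancel_right h g₀
  rw [hcoset]
  -- count permutations fixing T pointwise
  have h1 : (Finset.univ.filter fun h : Equiv.Perm (Fin n) => ∀ y ∈ T, h y = y).card
      = Fintype.card {h : Equiv.Perm (Fin n) // ∀ y ∈ T, h y = y} :=
    (Fintype.card_subtype _).symm
  have e2 : {h : Equiv.Perm (Fin n) // ∀ y ∈ T, h y = y}
      ≃ Equiv.Perm {y : Fin n // ¬ y ∈ T} := by
    refine (Equiv.subtypeEquivRight ?_).trans
      (Equiv.Perm.subtypeEquivSubtypePerm (fun y => ¬ y ∈ T)).symm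
    intro h
    constructor
    · intro hy a ha; exact hy a (not_not.mp ha)
    · intro hy a ha; exact hy a (not_not_intro ha)
  rw [h1, Fintype.card_congr e2, Fintype.card_perm, Fintype.card_subtype_compl,
    Fintype.card_coe, Fintype.card_fin, hTcard]

end aux2

section aux3

private lemma factorial_sum_le (M : ℕ) :
    (∑ m ∈ Finset.range (M + 1), (M.choose m) * (M - m).factorial) + 1
      ≤ 3 * M.factorial := by
  induction M with
  | zero => simp
  | succ M ih =>
    have hstep : ∑ m ∈ Finset.range (M + 2), ((M + 1).choose m) * (M + 1 - m).factorial
        = (M + 1) * (∑ m ∈ Finset.range (M + 1), (M.choose m) * (M - m).factorial) + 1 := by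
      rw [Finset.sum_range_succ, Finset.mul_sum]
      simp only [Nat.choose_self, Nat.sub_self, Nat.factorial_zero, one_mul, mul_one]
      congr 1
      refine Finset.sum_congr rfl fun m hm => ?_
      have hmM : m ≤ M := Nat.lt_succ_iff.mp (Finset.mem_range.mp hm)
      have h1 : (M + 1).choose m * (M + 1 - m).factorial * m.factorial
          = (M + 1) * (M.choose m * (M - m).factorial) * m.factorial := by
        have e1 := Nat.choose_mul_factorial_mul_factorial (Nat.le_succ_of_le hmM)
        have e2 := Nat.choose_mul_factorial_mul_factorial hmM
        calc (M + 1).choose m * (M + 1 - m).factorial * m.factorial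
            = (M + 1).choose m * m.factorial * (M + 1 - m).factorial := by ring
          _ = (M + 1).factorial := e1
          _ = (M + 1) * M.factorial := rfl
          _ = (M + 1) * (M.choose m * m.factorial * (M - m).factorial) := by rw [e2]
          _ = (M + 1) * (M.choose m * (M - m).factorial) * m.factorial := by ring
      exact Nat.eq_of_mul_eq_mul_right m.factorial_pos h1
    rw [hstep]
    rcases Nat.eq_zero_or_pos M with hM | hM
    · subst hM; decide
    · have h2 : (M + 1) * (∑ m ∈ Finset.range (M + 1), (M.choose m) * (M - m).factorial) + 1 + 1
          ≤ (M + 1) * ((∑ m ∈ Finset.range (M + 1), (M.choose m) * (M - m).factorial) + 1) := by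
        rw [Nat.mul_add, mul_one]
        omega
      calc _ ≤ (M + 1) * ((∑ m ∈ Finset.range (M + 1), (M.choose m) * (M - m).factorial) + 1) := h2
        _ ≤ (M + 1) * (3 * M.factorial) := Nat.mul_le_mul_left _ ih
        _ = 3 * (M + 1).factorial := by rw [Nat.factorial_succ]; ring

private lemma sum_biUnion_le {ι α : Type*} [DecidableEq α] (s : Finset ι)
    (t : ι → Finset α) (w : α → ℕ) :
    ∑ x ∈ s.biUnion t, w x ≤ ∑ i ∈ s, ∑ x ∈ t i, w x := by
  classical
  induction s using Finset.induction_on with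
  | empty => simp
  | @insert a s ha ih =>
    rw [Finset.biUnion_insert, Finset.sum_insert ha]
    calc ∑ x ∈ t a ∪ s.biUnion t, w x
        ≤ ∑ x ∈ t a, w x + ∑ x ∈ (s.biUnion t) \ (t a), w x := by
          rw [← Finset.sum_union (Finset.disjoint_sdiff)]
          exact Finset.sum_le_sum_of_subset (by
            intro x hx
            rcases Finset.mem_union.mp hx with h | h
            · exact Finset.mem_union_left _ h
            · by_cases hxa : x ∈ t a
              · exact Finset.mem_union_left _ hxa
              · exact Finset.mem_union_right _ (Finset.mem_sdiff.mpr ⟨h, hxa⟩))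
      _ ≤ ∑ x ∈ t a, w x + ∑ x ∈ s.biUnion t, w x :=
          Nat.add_le_add_left (Finset.sum_le_sum_of_subset (Finset.sdiff_subset)) _
      _ ≤ ∑ x ∈ t a, w x + ∑ i ∈ s, ∑ x ∈ t i, w x := Nat.add_le_add_left ih _

end aux3

section aux4

private lemma pair_sum_le {n : ℕ} (p1 p2 : Fin n) (hp : p1 ≠ p2) :
    ∑ S ∈ Finset.univ.filter (fun S : Finset (Fin n) => p1 ∈ S ∧ p2 ∈ S),
      (n - S.card).factorial ≤ 3 * (n - 2).factorial := by
  classical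
  set A : Finset (Fin n) := {p1, p2} with hA
  have hAcard : A.card = 2 := Finset.card_pair hp
  have hsum : ∑ S ∈ Finset.univ.filter (fun S : Finset (Fin n) => p1 ∈ S ∧ p2 ∈ S),
      (n - S.card).factorial
      = ∑ R ∈ Aᶜ.powerset, (n - (R.card + 2)).factorial := by
    refine Finset.sum_bij' (fun S _ => S \ A) (fun R _ => R ∪ A) ?_ ?_ ?_ ?_ ?_
    · intro S hS
      rw [Finset.mem_powerset]
      intro x hx
      rw [Finset.mem_compl]
      exact (Finset.mem_sdiff.mp hx).2
    · intro R hR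
      simp only [Finset.mem_filter, Finset.mem_univ, true_and]
      constructor
      · exact Finset.mem_union_right _ (by simp [hA])
      · exact Finset.mem_union_right _ (by simp [hA])
    · intro S hS
      simp only [Finset.mem_filter, Finset.mem_univ, true_and] at hS
      exact Finset.sdiff_union_of_subset (by
        rw [hA, Finset.insert_subset_iff, Finset.singleton_subset_iff]
        exact ⟨hS.1, hS.2⟩)
    · intro R hR
      rw [Finset.mem_powerset] at hR
      apply Finset.union_sdiff_cancel_right
      rw [Finset.disjoint_left]
      intro x hxR hxA
      exact (Finset.mem_compl.mp (hR hxR)) hxA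
    · intro S hS
      simp only [Finset.mem_filter, Finset.mem_univ, true_and] at hS
      have hsub : A ⊆ S := by
        rw [hA, Finset.insert_subset_iff, Finset.singleton_subset_iff]
        exact ⟨hS.1, hS.2⟩
      have h1 : (S \ A).card = S.card - 2 := by
        rw [Finset.card_sdiff_of_subset hsub, hAcard]
      have h2 : 2 ≤ S.card := hAcard ▸ Finset.card_le_card hsub
      show (n - S.card).factorial = (n - ((S \ A).card + 2)).factorial
      congr 1
      omega
  rw [hsum, Finset.sum_powerset_apply_card (fun m => (n - (m + 2)).factorial)]
  have hAc : Aᶜ.card = n - 2 := by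
    rw [Finset.card_compl, hAcard, Fintype.card_fin]
  rw [hAc]
  calc ∑ m ∈ Finset.range (n - 2 + 1), (n - 2).choose m • (n - (m + 2)).factorial
      = ∑ m ∈ Finset.range (n - 2 + 1), (n - 2).choose m * ((n - 2) - m).factorial := by
        refine Finset.sum_congr rfl fun m _ => ?_
        rw [smul_eq_mul]
        congr 2
        omega
    _ ≤ 3 * (n - 2).factorial := le_trans (Nat.le_add_right _ 1) (factorial_sum_le (n - 2))

end aux4

section aux5
variable {n : ℕ}

private lemma pairs_card_le (f : Fin n → Fin n)
    (hf : ∀ y : Fin n, (Finset.univ.filter fun i => f i = y).card ≤ 2) :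
    (Finset.univ.filter fun p : Fin n × Fin n => p.1 ≠ p.2 ∧ f p.1 = f p.2).card ≤ n := by
  classical
  have hinj : Set.InjOn (Prod.fst : Fin n × Fin n → Fin n)
      ↑(Finset.univ.filter fun p : Fin n × Fin n => p.1 ≠ p.2 ∧ f p.1 = f p.2) := ?_
  · have h := Finset.card_le_card_of_injOn Prod.fst
      (t := (Finset.univ : Finset (Fin n))) (fun p _ => Finset.mem_univ _) hinj
    simpa using h
  · rintro ⟨i, j⟩ hp ⟨i', j'⟩ hq (h1 : i = i')
    subst h1
    simp only [Finset.coe_filter, Set.mem_setOf_eq, Finset.mem_univ, true_and] at hp hq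
    by_contra hne
    have hjj' : j ≠ j' := fun h => hne (by rw [h])
    have hsub : ({i, j, j'} : Finset (Fin n)) ⊆ Finset.univ.filter fun x => f x = f i := by
      intro x hx
      simp only [Finset.mem_insert, Finset.mem_singleton] at hx
      simp only [Finset.mem_filter, Finset.mem_univ, true_and]
      rcases hx with rfl | rfl | rfl
      · rfl
      · exact hp.2.symm
      · exact hq.2.symm
    have hcard : ({i, j, j'} : Finset (Fin n)).card = 3 := by
      rw [Finset.card_insert_of_notMem (by
        simp only [Finset.mem_insert, Finset.mem_singleton]
        push_neg
        exact ⟨hp.1, hq.1⟩),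
        Finset.card_insert_of_notMem (by simpa using hjj'), Finset.card_singleton]
    have h3 := le_trans (hcard ▸ Finset.card_le_card hsub) (hf (f i))
    omega

private lemma noninj_sum_le (f : Fin n → Fin n)
    (hf : ∀ y : Fin n, (Finset.univ.filter fun i => f i = y).card ≤ 2) :
    ∑ S ∈ Finset.univ.filter (fun S : Finset (Fin n) => ¬ Set.InjOn f S),
      (n - S.card).factorial ≤ 3 * n * (n - 2).factorial := by
  classical
  set Pairs := Finset.univ.filter fun p : Fin n × Fin n => p.1 ≠ p.2 ∧ f p.1 = f p.2 with hP
  set B : Fin n × Fin n → Finset (Finset (Fin n)) :=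
    fun p => Finset.univ.filter (fun S : Finset (Fin n) => p.1 ∈ S ∧ p.2 ∈ S) with hB
  have hsubset : Finset.univ.filter (fun S : Finset (Fin n) => ¬ Set.InjOn f S)
      ⊆ Pairs.biUnion B := by
    intro S hS
    simp only [Finset.mem_filter, Finset.mem_univ, true_and] at hS
    rw [Set.InjOn] at hS
    push_neg at hS
    obtain ⟨a, ha, b, hb, hab, hne⟩ := hS
    rw [Finset.mem_biUnion]
    refine ⟨(a, b), ?_, ?_⟩
    · simp only [hP, Finset.mem_filter, Finset.mem_univ, true_and]
      exact ⟨hne, hab⟩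
    · simp only [hB, Finset.mem_filter, Finset.mem_univ, true_and]
      exact ⟨Finset.mem_coe.mp ha, Finset.mem_coe.mp hb⟩
  calc ∑ S ∈ Finset.univ.filter (fun S : Finset (Fin n) => ¬ Set.InjOn f S),
        (n - S.card).factorial
      ≤ ∑ S ∈ Pairs.biUnion B, (n - S.card).factorial :=
        Finset.sum_le_sum_of_subset hsubset
    _ ≤ ∑ p ∈ Pairs, ∑ S ∈ B p, (n - S.card).factorial := sum_biUnion_le _ _ _
    _ ≤ ∑ p ∈ Pairs, 3 * (n - 2).factorial := by
        refine Finset.sum_le_sum fun p hp => ?_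
        simp only [hP, Finset.mem_filter, Finset.mem_univ, true_and] at hp
        exact pair_sum_le p.1 p.2 hp.1
    _ = Pairs.card * (3 * (n - 2).factorial) := by rw [Finset.sum_const, smul_eq_mul]
    _ ≤ n * (3 * (n - 2).factorial) :=
        Nat.mul_le_mul_right _ (pairs_card_le f hf)
    _ = 3 * n * (n - 2).factorial := by ring

private lemma diff_bound (f : Fin n → Fin n)
    (hf : ∀ y : Fin n, (Finset.univ.filter fun i => f i = y).card ≤ 2) :
    |((Finset.univ.filter fun g : Equiv.Perm (Fin n) => ∀ i, g i ≠ f i).card : ℤ)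
      - ((Finset.univ.filter fun g : Equiv.Perm (Fin n) => ∀ i, g i ≠ i).card : ℤ)|
      ≤ 3 * n * (n - 2).factorial := by
  classical
  have hidcast : ((Finset.univ.filter fun g : Equiv.Perm (Fin n) => ∀ i, g i ≠ i).card : ℤ)
      = ∑ S : Finset (Fin n), (-1 : ℤ) ^ S.card * agreeCount (fun i : Fin n => i) S :=
    incl_excl (fun i => i)
  rw [incl_excl f, hidcast]
  have hdiff : (∑ S : Finset (Fin n), (-1 : ℤ) ^ S.card * agreeCount f S)
      - (∑ S : Finset (Fin n), (-1 : ℤ) ^ S.card * agreeCount (fun i : Fin n => i) S)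
      = ∑ S ∈ Finset.univ.filter (fun S : Finset (Fin n) => ¬ Set.InjOn f S),
          (-((-1 : ℤ) ^ S.card * (n - S.card).factorial)) := by
    rw [← Finset.sum_sub_distrib, Finset.sum_filter]
    refine Finset.sum_congr rfl fun S _ => ?_
    by_cases hS : Set.InjOn f S
    · rw [agreeCount_of_injOn f S hS,
        agreeCount_of_injOn (fun i : Fin n => i) S (Function.injective_id.injOn),
        if_neg (not_not_intro hS)]
      ring
    · rw [agreeCount_of_not_injOn f S hS,
        agreeCount_of_injOn (fun i : Fin n => i) S (Function.injective_id.injOn),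
        if_pos hS]
      push_cast
      ring
  rw [hdiff]
  calc |∑ S ∈ Finset.univ.filter (fun S : Finset (Fin n) => ¬ Set.InjOn f S),
        (-((-1 : ℤ) ^ S.card * (n - S.card).factorial))|
      ≤ ∑ S ∈ Finset.univ.filter (fun S : Finset (Fin n) => ¬ Set.InjOn f S),
        |(-((-1 : ℤ) ^ S.card * (n - S.card).factorial))| := Finset.abs_sum_le_sum_abs _ _
    _ = ∑ S ∈ Finset.univ.filter (fun S : Finset (Fin n) => ¬ Set.InjOn f S),
        (((n - S.card).factorial : ℤ)) := by
        refine Finset.sum_congr rfl fun S _ => ?_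
        rw [abs_neg, abs_mul, abs_pow, abs_neg, abs_one, one_pow, one_mul,
          Int.abs_natCast]
    _ ≤ ((3 * n * (n - 2).factorial : ℕ) : ℤ) := by
        rw [← Nat.cast_sum]
        exact_mod_cast noninj_sum_le f hf
    _ = _ := by push_cast; ring

end aux5

private lemma card_id_eq (n : ℕ) :
    (Finset.univ.filter fun g : Equiv.Perm (Fin n) => ∀ i, g i ≠ i).card
      = numDerangements n := by
  classical
  have h := card_derangements_eq_numDerangements (Fin n)
  rw [Fintype.card_fin] at h
  rw [← h, ← Set.toFinset_card]
  congr 1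
  ext g
  simp [derangements]
  exact (Set.mem_toFinset (s := derangements (Fin n))).symm

/-- For every sequence of 2-max functions f_n : {1,...,n} → {1,...,n}, the
fraction of permutations that are f_n-derangements converges to 1/e. -/
theorem stmt_15 (F : (n : ℕ) → Fin n → Fin n)
    (hF : ∀ (n : ℕ) (y : Fin n),
      (Finset.univ.filter fun i : Fin n => F n i = y).card ≤ 2) :
    Tendsto
      (fun n : ℕ =>
        ((Finset.univ.filter fun g : Equiv.Perm (Fin n) => ∀ i, g i ≠ F n i).card : ℝ)
          / (Nat.factorial n))
      atTop (nhds (1 / Real.exp 1)) := by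
  classical
  set D : ℕ → ℕ := fun n =>
    (Finset.univ.filter fun g : Equiv.Perm (Fin n) => ∀ i, g i ≠ F n i).card with hD
  have key : ∀ n : ℕ, |(D n : ℝ) - (numDerangements n : ℝ)|
      ≤ 3 * n * ((n - 2).factorial : ℝ) := by
    intro n
    have h := diff_bound (F n) (hF n)
    rw [card_id_eq n] at h
    exact_mod_cast h
  have herr : Tendsto (fun n : ℕ => (D n : ℝ) / n.factorial
      - (numDerangements n : ℝ) / n.factorial) atTop (nhds 0) := by
    refine squeeze_zero_norm' ?_ (tendsto_const_div_atTop_nhds_zero_nat 6)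
    filter_upwards [eventually_ge_atTop 2] with n hn
    obtain ⟨m, rfl⟩ : ∃ m, n = m + 2 := ⟨n - 2, by omega⟩
    have hfpos : (0 : ℝ) < ((m + 2).factorial : ℝ) := by positivity
    rw [div_sub_div_same, Real.norm_eq_abs, abs_div, abs_of_pos hfpos]
    have h1 : |(D (m + 2) : ℝ) - (numDerangements (m + 2) : ℝ)|
        ≤ 3 * (m + 2) * ((m : ℕ).factorial : ℝ) := by
      have := key (m + 2)
      simpa using this
    have h2 : |(D (m + 2) : ℝ) - (numDerangements (m + 2) : ℝ)| / ((m + 2).factorial : ℝ)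
        ≤ 3 * (m + 2) * ((m : ℕ).factorial : ℝ) / ((m + 2).factorial : ℝ) :=
      (div_le_div_iff_of_pos_right hfpos).mpr h1
    refine h2.trans ?_
    have hm2 : (0 : ℝ) < ((m : ℕ) + 2 : ℝ) := by positivity
    rw [div_le_div_iff₀ hfpos (by positivity)]
    have hfs : ((m + 2).factorial : ℝ) = (m + 2) * (m + 1) * (m.factorial : ℝ) := by
      rw [Nat.factorial_succ, Nat.factorial_succ]
      push_cast
      ring
    rw [hfs]
    push_cast
    have hmf : (0 : ℝ) < (m.factorial : ℝ) := by positivity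
    nlinarith [hmf, (by positivity : (0:ℝ) ≤ (m:ℝ))]
  have hnum := numDerangements_tendsto_inv_e
  have heq : (fun n : ℕ => (D n : ℝ) / n.factorial)
      = fun n : ℕ => (numDerangements n : ℝ) / n.factorial
          + ((D n : ℝ) / n.factorial - (numDerangements n : ℝ) / n.factorial) := by
    funext n; ring
  have final := hnum.add herr
  rw [add_zero] at final
  have final2 : Tendsto (fun n : ℕ => (D n : ℝ) / n.factorial) atTop (nhds (Real.exp (-1))) := by
    rw [heq]; exact final
  have hexp : (1 : ℝ) / Real.exp 1 = Real.exp (-1) := by rw [Real.exp_neg, one_div]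
  rw [hexp]
  exact final2
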